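/- arXiv:2605.18887 — 2 statements merged into one kernel-verified Lean document; each statement's English description precedes it below -/
import Mathlib

section
/- Let $Z_1, Z_2$ be independent standard normal random variables and define $T = Z_1^2 + Z_2^2$ if $Z_1 > 0, Z_2 > 0$; $T = Z_1^2$ if $Z_1 > 0, Z_2 \le 0$; $T = Z_2^2$ if $Z_1 \le 0, Z_2 > 0$; and $T = \min(Z_1^2, Z_2^2)$ if $Z_1 \le 0, Z_2 \le 0$. Then for every $t \ge 0$, $P(T \le t) = \frac{1}{4}F_2(t) + F_1(t) - \frac{1}{4}F_1(t)^2$, where $F_k$ is the CDF of the chi-squared distribution with $k$ degrees of freedom. -/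
open MeasureTheory ProbabilityTheory Real

/-- CDF of the chi-squared distribution with `k` degrees of freedom
(as the Gamma(k/2, 1/2) distribution). -/
noncomputable def chiSqCDF (k : ℕ) (t : ℝ) : ℝ :=
  ((gammaMeasure ((k : ℝ) / 2) (1 / 2)) (Set.Iic t)).toReal


lemma gauss_even (x : ℝ) : gaussianPDFReal 0 1 (-x) = gaussianPDFReal 0 1 x := by
  simp [gaussianPDFReal, neg_sq]

lemma gauss_int : Integrable (gaussianPDFReal 0 1) := integrable_gaussianPDFReal 0 1

lemma int_gauss_Iic_zero : ∫ x in Set.Iic (0:ℝ), gaussianPDFReal 0 1 x = 1/2 := by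
  have h1 : ∫ x in Set.Iic (0:ℝ), gaussianPDFReal 0 1 x
      = ∫ x in Set.Ioi (0:ℝ), gaussianPDFReal 0 1 x := by
    have h := integral_comp_neg_Iic 0 (gaussianPDFReal 0 1)
    simp only [gauss_even, neg_zero] at h
    exact h
  have h3 : (∫ x in Set.Iic (0:ℝ), gaussianPDFReal 0 1 x)
      + ∫ x in Set.Ioi (0:ℝ), gaussianPDFReal 0 1 x = 1 := by
    rw [← integral_gaussianPDFReal_eq_one 0 (v := 1) (by norm_num)]
    have := integral_add_compl (measurableSet_Iic (a := (0:ℝ))) gauss_int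
    rw [Set.compl_Iic] at this
    exact this
  linarith [h1, h3]

lemma int_gauss_Iio_neg (s : ℝ) : ∫ x in Set.Iio (-s), gaussianPDFReal 0 1 x
    = ∫ x in Set.Ioi s, gaussianPDFReal 0 1 x := by
  have h := integral_comp_neg_Ioi s (gaussianPDFReal 0 1)
  simp only [gauss_even] at h
  rw [← integral_Iic_eq_integral_Iio, ← h]

lemma int_gauss_Ioi (s : ℝ) (hs : 0 ≤ s) : ∫ x in Set.Ioi s, gaussianPDFReal 0 1 x
    = 1/2 - ∫ x in Set.Ioc 0 s, gaussianPDFReal 0 1 x := by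
  have hsplit : (∫ x in Set.Ioc 0 s, gaussianPDFReal 0 1 x)
      + ∫ x in Set.Ioi s, gaussianPDFReal 0 1 x
      = ∫ x in Set.Ioi (0:ℝ), gaussianPDFReal 0 1 x := by
    rw [← setIntegral_union (Set.Ioc_disjoint_Ioi le_rfl) measurableSet_Ioi
      gauss_int.integrableOn gauss_int.integrableOn, Set.Ioc_union_Ioi_eq_Ioi hs]
  have h3 : (∫ x in Set.Iic (0:ℝ), gaussianPDFReal 0 1 x)
      + ∫ x in Set.Ioi (0:ℝ), gaussianPDFReal 0 1 x = 1 := by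
    rw [← integral_gaussianPDFReal_eq_one 0 (v := 1) (by norm_num)]
    have := integral_add_compl (measurableSet_Iic (a := (0:ℝ))) gauss_int
    rw [Set.compl_Iic] at this
    exact this
  have := int_gauss_Iic_zero
  linarith
lemma chiSqCDF_eq_integral (k : ℕ) (hk : 0 < k) (t : ℝ) :
    chiSqCDF k t = ∫ x in Set.Iic t, gammaPDFReal ((k : ℝ)/2) (1/2) x := by
  have ha : (0:ℝ) < (k:ℝ)/2 := by positivity
  have : IsProbabilityMeasure (gammaMeasure ((k : ℝ)/2) (1/2)) :=
    isProbabilityMeasure_gammaMeasure ha (by norm_num)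
  rw [chiSqCDF, ← measureReal_def, ← cdf_eq_real, cdf_gammaMeasure_eq_integral ha (by norm_num)]

lemma exp_halves_deriv (x : ℝ) :
    HasDerivAt (fun x : ℝ => -exp (-(1/2*x))) ((1/2) * exp (-(1/2*x))) x := by
  have h1 : HasDerivAt (fun x : ℝ => -(1/2*x)) (-(1/2)) x := by
    simpa using ((hasDerivAt_id x).const_mul (1/2 : ℝ)).fun_neg
  have := h1.exp.fun_neg
  refine this.congr_deriv ?_
  ring

lemma int_exp_halves (t : ℝ) (ht : 0 ≤ t) :
    ∫ x in Set.Ioc 0 t, (1/2) * exp (-(1/2*x)) = 1 - exp (-(t/2)) := by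
  rw [← intervalIntegral.integral_of_le ht]
  rw [intervalIntegral.integral_eq_sub_of_hasDerivAt (fun x _ => exp_halves_deriv x)
    (by apply Continuous.intervalIntegrable; continuity)]
  simp only [mul_zero, neg_zero, exp_zero]
  ring_nf

lemma chiSqCDF_two (t : ℝ) (ht : 0 ≤ t) : chiSqCDF 2 t = 1 - exp (-(t/2)) := by
  rw [chiSqCDF_eq_integral 2 two_pos]
  have h2 : ((2:ℕ):ℝ)/2 = 1 := by norm_num
  rw [h2]
  have hpdf : ∀ x : ℝ, gammaPDFReal 1 (1/2) x
      = Set.indicator (Set.Ici 0) (fun x => (1/2) * exp (-(1/2*x))) x := by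
    intro x
    rw [gammaPDFReal]
    by_cases hx : 0 ≤ x
    · rw [if_pos hx, Set.indicator_of_mem (Set.mem_Ici.mpr hx)]
      rw [Real.rpow_one, Real.Gamma_one, sub_self, Real.rpow_zero]
      ring
    · rw [if_neg hx, Set.indicator_of_notMem (by simpa using hx)]
  simp only [hpdf]
  rw [setIntegral_indicator measurableSet_Ici]
  have hset : Set.Iic t ∩ Set.Ici 0 = Set.Icc 0 t := by
    rw [Set.inter_comm, Set.Ici_inter_Iic]
  rw [hset, integral_Icc_eq_integral_Ioc, int_exp_halves t ht]


lemma integrable_gammaPDFReal' {a r : ℝ} (ha : 0 < a) (hr : 0 < r) :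
    Integrable (gammaPDFReal a r) := by
  refine ⟨(measurable_gammaPDFReal a r).aestronglyMeasurable, ?_⟩
  rw [hasFiniteIntegral_iff_ofReal (ae_of_all _ (gammaPDFReal_nonneg ha hr))]
  have : (fun x => ENNReal.ofReal (gammaPDFReal a r x)) = gammaPDF a r := rfl
  rw [this, lintegral_gammaPDF_eq_one ha hr]
  exact ENNReal.one_lt_top

lemma gamma_half_cont {s : Set ℝ} (hs : ∀ x ∈ s, (0:ℝ) < x) :
    ContinuousOn (gammaPDFReal (1/2) (1/2)) s := by
  have heq : Set.EqOn (gammaPDFReal (1/2) (1/2))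
      (fun x => (1/2:ℝ)^((1/2):ℝ) / Gamma (1/2) * x ^ ((1/2:ℝ)-1) * exp (-(1/2*x))) s := by
    intro x hx
    rw [gammaPDFReal, if_pos (hs x hx).le]
  refine ContinuousOn.congr ?_ heq
  refine ContinuousOn.mul (ContinuousOn.mul continuousOn_const ?_) (by fun_prop)
  exact fun x hx =>
    (Real.continuousAt_rpow_const x _ (Or.inl (ne_of_gt (hs x hx)))).continuousWithinAt

/-- pointwise substitution identity -/
lemma gamma_gauss_pt {x : ℝ} (hx : 0 < x) :
    (2*x) * gammaPDFReal (1/2) (1/2) (x^2) = 2 * gaussianPDFReal 0 1 x := by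
  rw [gammaPDFReal, if_pos (by positivity), gaussianPDFReal]
  have h1 : (x^2 : ℝ) ^ ((1/2:ℝ)-1) = x⁻¹ := by
    rw [← Real.rpow_natCast x 2, ← Real.rpow_mul hx.le]
    norm_num [Real.rpow_neg_one]
  rw [h1]
  have h2 : ((1/2:ℝ))^((1/2):ℝ) = (Real.sqrt 2)⁻¹ := by
    rw [← Real.sqrt_eq_rpow]
    rw [show (1/2:ℝ) = 2⁻¹ by norm_num, Real.sqrt_inv]
  rw [h2, Real.Gamma_one_half_eq]
  have h3 : Real.sqrt (2 * π * (1:NNReal)) = Real.sqrt 2 * Real.sqrt π := by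
    push_cast
    rw [mul_one, Real.sqrt_mul (by norm_num)]
  rw [h3]
  have h4 : rexp (-(1/2 * x^2)) = rexp (-(x - 0)^2/(2 * (1:NNReal))) := by
    congr 1
    push_cast
    ring
  rw [h4]
  have hs2 : (0:ℝ) < Real.sqrt 2 := Real.sqrt_pos.mpr (by norm_num)
  have hsp : (0:ℝ) < Real.sqrt π := Real.sqrt_pos.mpr Real.pi_pos
  field_simp

lemma gamma_gauss_interval {ε t : ℝ} (hε : 0 < ε) (hεt : ε ≤ t) :
    ∫ x in Set.Ioc ε t, gammaPDFReal (1/2) (1/2) x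
      = 2 * ∫ x in Set.Ioc (Real.sqrt ε) (Real.sqrt t), gaussianPDFReal 0 1 x := by
  have hst : Real.sqrt ε ≤ Real.sqrt t := Real.sqrt_le_sqrt hεt
  rw [← intervalIntegral.integral_of_le hεt, ← intervalIntegral.integral_of_le hst]
  have key : (∫ x in (Real.sqrt ε)..(Real.sqrt t), (2*x) • gammaPDFReal (1/2) (1/2) (x^2))
      = ∫ u in ((Real.sqrt ε)^2)..((Real.sqrt t)^2), gammaPDFReal (1/2) (1/2) u := by
    apply intervalIntegral.integral_comp_smul_deriv' (f := fun x => x^2) (f' := fun x => 2*x)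
      (g := gammaPDFReal (1/2) (1/2))
    · intro x hx
      simpa [mul_comm] using hasDerivAt_pow 2 x
    · fun_prop
    · apply gamma_half_cont
      rintro y ⟨x, hx, rfl⟩
      rw [Set.uIcc_of_le hst] at hx
      have : 0 < x := lt_of_lt_of_le (Real.sqrt_pos.mpr hε) hx.1
      positivity
  rw [Real.sq_sqrt hε.le, Real.sq_sqrt (hε.le.trans hεt)] at key
  rw [← key, ← intervalIntegral.integral_const_mul]
  apply intervalIntegral.integral_congr
  intro x hx
  rw [Set.uIcc_of_le hst] at hx
  have hx0 : 0 < x := lt_of_lt_of_le (Real.sqrt_pos.mpr hε) hx.1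
  simpa [smul_eq_mul] using (gamma_gauss_pt hx0)

lemma chiSq_one_core {t : ℝ} (ht : 0 < t) :
    ∫ x in Set.Ioc 0 t, gammaPDFReal (1/2) (1/2) x
      = 2 * ∫ x in Set.Ioc 0 (Real.sqrt t), gaussianPDFReal 0 1 x := by
  have hint : Integrable (gammaPDFReal (1/2) (1/2)) :=
    integrable_gammaPDFReal' (by norm_num) (by norm_num)
  set ε : ℕ → ℝ := fun n => t / (n+1) with hε
  have hεpos : ∀ n, 0 < ε n := fun n => by positivity
  have hεle : ∀ n, ε n ≤ t := by
    intro n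
    rw [hε, div_le_iff₀ (by positivity)]
    nlinarith [Nat.cast_nonneg (α := ℝ) n]
  have hεanti : ∀ m n : ℕ, m ≤ n → ε n ≤ ε m := by
    intro m n hmn
    apply div_le_div_of_nonneg_left ht.le (by positivity)
    exact_mod_cast by push_cast; linarith [Nat.cast_le (α := ℝ).mpr hmn]
  have hmono : Monotone (fun n => Set.Ioc (ε n) t) := by
    intro m n hmn
    exact Set.Ioc_subset_Ioc_left (hεanti m n hmn)
  have hunion : (⋃ n, Set.Ioc (ε n) t) = Set.Ioc 0 t := by
    ext x
    simp only [Set.mem_iUnion, Set.mem_Ioc]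
    constructor
    · rintro ⟨n, h1, h2⟩
      exact ⟨(hεpos n).trans h1, h2⟩
    · rintro ⟨hx0, hxt⟩
      obtain ⟨n, hn⟩ := exists_nat_gt (t / x)
      refine ⟨n, ?_, hxt⟩
      rw [div_lt_iff₀ hx0] at hn
      rw [hε, div_lt_iff₀ (by positivity)]
      nlinarith
  have hmono' : Monotone (fun n => Set.Ioc (Real.sqrt (ε n)) (Real.sqrt t)) := by
    intro m n hmn
    exact Set.Ioc_subset_Ioc_left (Real.sqrt_le_sqrt (hεanti m n hmn))
  have hunion' : (⋃ n, Set.Ioc (Real.sqrt (ε n)) (Real.sqrt t)) = Set.Ioc 0 (Real.sqrt t) := by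
    ext y
    simp only [Set.mem_iUnion, Set.mem_Ioc]
    constructor
    · rintro ⟨n, h1, h2⟩
      exact ⟨(Real.sqrt_pos.mpr (hεpos n)).trans h1, h2⟩
    · rintro ⟨hy0, hyt⟩
      obtain ⟨n, hn⟩ := exists_nat_gt (t / y^2)
      refine ⟨n, ?_, hyt⟩
      rw [Real.sqrt_lt' hy0, hε]
      rw [div_lt_iff₀ (by positivity)] at hn ⊢
      nlinarith [sq_nonneg y]
  have L1 := tendsto_setIntegral_of_monotone (f := gammaPDFReal (1/2) (1/2))
    (fun n => measurableSet_Ioc) hmono (by rw [hunion]; exact hint.integrableOn)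
  rw [hunion] at L1
  have L2 := tendsto_setIntegral_of_monotone (f := gaussianPDFReal 0 1)
    (fun n => measurableSet_Ioc) hmono'
    (by rw [hunion']; exact (integrable_gaussianPDFReal 0 1).integrableOn)
  rw [hunion'] at L2
  have heq : (fun n => ∫ x in Set.Ioc (ε n) t, gammaPDFReal (1/2) (1/2) x)
      = fun n => 2 * ∫ x in Set.Ioc (Real.sqrt (ε n)) (Real.sqrt t), gaussianPDFReal 0 1 x :=
    funext fun n => gamma_gauss_interval (hεpos n) (hεle n)
  rw [heq] at L1
  exact tendsto_nhds_unique L1 (L2.const_mul 2)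

lemma Iic_to_Ioc {a r t : ℝ} (ht : 0 ≤ t) :
    ∫ x in Set.Iic t, gammaPDFReal a r x = ∫ x in Set.Ioc 0 t, gammaPDFReal a r x := by
  have hpdf : ∀ x : ℝ, gammaPDFReal a r x
      = Set.indicator (Set.Ici 0) (fun x => r ^ a / (Gamma a) * x ^ (a-1) * exp (-(r * x))) x := by
    intro x
    rw [gammaPDFReal]
    by_cases hx : 0 ≤ x
    · rw [if_pos hx, Set.indicator_of_mem (Set.mem_Ici.mpr hx)]
    · rw [if_neg hx, Set.indicator_of_notMem (by simpa using hx)]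
  simp only [hpdf]
  rw [setIntegral_indicator measurableSet_Ici, setIntegral_indicator measurableSet_Ici]
  have h1 : Set.Iic t ∩ Set.Ici 0 = Set.Icc 0 t := by rw [Set.inter_comm, Set.Ici_inter_Iic]
  have h2 : Set.Ioc 0 t ∩ Set.Ici 0 = Set.Ioc 0 t := by
    rw [Set.inter_eq_left]
    exact fun x hx => le_of_lt hx.1
  rw [h1, h2, integral_Icc_eq_integral_Ioc]

lemma chiSqCDF_one (t : ℝ) (ht : 0 ≤ t) :
    chiSqCDF 1 t = 2 * ∫ x in Set.Ioc 0 (Real.sqrt t), gaussianPDFReal 0 1 x := by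
  rw [chiSqCDF_eq_integral 1 one_pos]
  have h1 : ((1:ℕ):ℝ)/2 = 1/2 := by norm_num
  rw [h1, Iic_to_Ioc ht]
  rcases eq_or_lt_of_le ht with h | h
  · rw [← h]
    simp [Real.sqrt_zero]
  · exact chiSq_one_core h


lemma gauss_prod :
    (gaussianReal 0 1).prod (gaussianReal 0 1)
      = (volume : Measure (ℝ × ℝ)).withDensity
          (fun p => gaussianPDF 0 1 p.1 * gaussianPDF 0 1 p.2) := by
  have hν : gaussianReal 0 1 = volume.withDensity (gaussianPDF 0 1) :=
    gaussianReal_of_var_ne_zero 0 (by norm_num)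
  refine Measure.prod_eq fun s t hs ht => ?_
  rw [withDensity_apply _ (hs.prod ht), Measure.volume_eq_prod, ← Measure.prod_restrict,
    lintegral_prod_mul (measurable_gaussianPDF 0 1).aemeasurable
      (measurable_gaussianPDF 0 1).aemeasurable,
    hν, withDensity_apply _ hs, withDensity_apply _ ht]

lemma gauss_mul (a b : ℝ) :
    gaussianPDFReal 0 1 a * gaussianPDFReal 0 1 b
      = (2*π)⁻¹ * exp (-((a^2+b^2)/2)) := by
  rw [gaussianPDFReal, gaussianPDFReal]
  push_cast
  rw [mul_one, sub_zero, sub_zero, mul_mul_mul_comm, ← exp_add,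
    ← mul_inv, Real.mul_self_sqrt (by positivity)]
  congr 1
  ring

lemma angle_iff {r θ : ℝ} (hr : 0 < r) (hθ : θ ∈ Set.Ioo (-π) π) :
    (0 < r * Real.cos θ ∧ 0 < r * Real.sin θ) ↔ θ ∈ Set.Ioo 0 (π/2) := by
  have hπ := Real.pi_pos
  obtain ⟨hθ1, hθ2⟩ := hθ
  constructor
  · rintro ⟨hc, hs⟩
    have hc' : 0 < Real.cos θ := by nlinarith
    have hs' : 0 < Real.sin θ := by nlinarith
    constructor
    · by_contra h0
      push_neg at h0
      exact absurd (Real.sin_nonpos_of_nonpos_of_neg_pi_le h0 hθ1.le) (by linarith)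
    · by_contra h2
      push_neg at h2
      exact absurd (Real.cos_nonpos_of_pi_div_two_le_of_le h2 (by linarith)) (by linarith)
  · rintro ⟨h0, h2⟩
    have hc : 0 < Real.cos θ := Real.cos_pos_of_mem_Ioo ⟨by linarith, h2⟩
    have hs : 0 < Real.sin θ := Real.sin_pos_of_pos_of_lt_pi h0 (by linarith)
    exact ⟨mul_pos hr hc, mul_pos hr hs⟩

lemma rexp_sq_deriv (c r : ℝ) :
    HasDerivAt (fun r : ℝ => -c * exp (-(r^2/2))) (r * (c * exp (-(r^2/2)))) r := by
  have h1 : HasDerivAt (fun r : ℝ => -(r^2/2)) (-r) r := by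
    have := (hasDerivAt_pow 2 r).div_const 2
    simpa using this.fun_neg
  have := (h1.exp).const_mul (-c)
  refine this.congr_deriv ?_
  push_cast
  ring

lemma int_radial (c t : ℝ) (ht : 0 ≤ t) :
    ∫ r in Set.Ioc 0 (Real.sqrt t), r * (c * exp (-(r^2/2)))
      = c * (1 - exp (-(t/2))) := by
  rw [← intervalIntegral.integral_of_le (Real.sqrt_nonneg t),
    intervalIntegral.integral_eq_sub_of_hasDerivAt (fun x _ => rexp_sq_deriv c x)
      (by apply Continuous.intervalIntegrable; fun_prop)]
  rw [Real.sq_sqrt ht]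
  norm_num
  ring

lemma quarter_meas : MeasurableSet {p : ℝ × ℝ | 0 < p.1 ∧ 0 < p.2 ∧ p.1^2 + p.2^2 ≤ t} := by
  apply MeasurableSet.inter (measurableSet_lt measurable_const measurable_fst)
  apply MeasurableSet.inter (measurableSet_lt measurable_const measurable_snd)
  exact measurableSet_le ((measurable_fst.pow_const 2).add (measurable_snd.pow_const 2))
    measurable_const

lemma quarter_toReal (t : ℝ) (ht : 0 ≤ t) :
    (((gaussianReal 0 1).prod (gaussianReal 0 1))
        {p : ℝ × ℝ | 0 < p.1 ∧ 0 < p.2 ∧ p.1^2 + p.2^2 ≤ t}).toReal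
      = (1/4) * (1 - exp (-(t/2))) := by
  set Q : Set (ℝ × ℝ) := {p : ℝ × ℝ | 0 < p.1 ∧ 0 < p.2 ∧ p.1^2 + p.2^2 ≤ t} with hQ
  have hQm : MeasurableSet Q := quarter_meas
  set fR : ℝ × ℝ → ℝ := fun p => gaussianPDFReal 0 1 p.1 * gaussianPDFReal 0 1 p.2 with hfR
  have hfRnn : ∀ p, 0 ≤ fR p := fun p =>
    mul_nonneg (gaussianPDFReal_nonneg 0 1 _) (gaussianPDFReal_nonneg 0 1 _)
  have hfRint : Integrable fR (volume : Measure (ℝ × ℝ)) := by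
    rw [hfR, Measure.volume_eq_prod]
    exact Integrable.mul_prod (integrable_gaussianPDFReal 0 1) (integrable_gaussianPDFReal 0 1)
  -- measure to integral
  have hdd : (fun p : ℝ × ℝ => gaussianPDF 0 1 p.1 * gaussianPDF 0 1 p.2)
      = fun p => ENNReal.ofReal (fR p) := by
    funext p
    rw [gaussianPDF, gaussianPDF, hfR, ← ENNReal.ofReal_mul (gaussianPDFReal_nonneg 0 1 _)]
  have h1 : ((gaussianReal 0 1).prod (gaussianReal 0 1)) Q
      = ENNReal.ofReal (∫ p in Q, fR p) := by
    rw [gauss_prod, hdd, withDensity_apply _ hQm,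
      ← ofReal_integral_eq_lintegral_ofReal hfRint.integrableOn (ae_of_all _ hfRnn)]
  rw [h1, ENNReal.toReal_ofReal (integral_nonneg hfRnn)]
  -- polar change of variables
  rw [← integral_indicator hQm, ← integral_comp_polarCoord_symm]
  have htarget : polarCoord.target = Set.Ioi (0:ℝ) ×ˢ Set.Ioo (-π) π := rfl
  set u : ℝ → ℝ := fun r => (Set.Ioc 0 (Real.sqrt t)).indicator
    (fun r => r * ((2*π)⁻¹ * exp (-(r^2/2)))) r with hu
  set v : ℝ → ℝ := fun θ => (Set.Ioo 0 (π/2)).indicator (fun _ => (1:ℝ)) θ with hv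
  have hcongr : ∀ p ∈ polarCoord.target,
      p.1 • (Q.indicator fR) (polarCoord.symm p) = u p.1 * v p.2 := by
    rintro ⟨r, θ⟩ hp
    dsimp only
    rw [htarget] at hp
    obtain ⟨hr, hθ⟩ := hp
    rw [Set.mem_Ioi] at hr
    have hsymm : polarCoord.symm (r, θ) = (r * Real.cos θ, r * Real.sin θ) := rfl
    rw [hsymm]
    have hsq : (r * Real.cos θ)^2 + (r * Real.sin θ)^2 = r^2 := by
      have := Real.sin_sq_add_cos_sq θ
      nlinarith [this]
    by_cases hmem : (r * Real.cos θ, r * Real.sin θ) ∈ Q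
    · have hmem' := hmem
      obtain ⟨hm1, hm2, hm3⟩ := hmem'
      dsimp only at hm1 hm2 hm3
      have hang : θ ∈ Set.Ioo 0 (π/2) := (angle_iff hr hθ).mp ⟨hm1, hm2⟩
      have hrle : r ≤ Real.sqrt t := by
        rw [Real.le_sqrt hr.le ht]
        rw [hsq] at hm3
        exact hm3
      simp only [hu, hv]
      rw [Set.indicator_of_mem hmem,
        Set.indicator_of_mem (Set.mem_Ioc.mpr ⟨hr, hrle⟩),
        Set.indicator_of_mem hang, hfR]
      dsimp only
      rw [gauss_mul, hsq, smul_eq_mul]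
      ring
    · rw [Set.indicator_of_notMem hmem, smul_zero]
      simp only [hu, hv]
      by_cases hang : θ ∈ Set.Ioo 0 (π/2)
      · have hrgt : ¬ r ≤ Real.sqrt t := by
          intro hrle
          apply hmem
          refine ⟨?_, ?_, ?_⟩
          · exact ((angle_iff hr hθ).mpr hang).1
          · exact ((angle_iff hr hθ).mpr hang).2
          · dsimp only
            rw [hsq, ← Real.sq_sqrt ht]
            exact pow_le_pow_left₀ hr.le hrle 2
        rw [Set.indicator_of_notMem (fun h => hrgt (Set.mem_Ioc.mp h).2)]
        ring
      · rw [Set.indicator_of_notMem hang]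
        ring
  rw [setIntegral_congr_fun polarCoord.open_target.measurableSet hcongr]
  rw [htarget, Measure.volume_eq_prod, ← Measure.prod_restrict, integral_prod_mul]
  have hπ := Real.pi_pos
  have hI1 : ∫ r in Set.Ioi (0:ℝ), u r = (2*π)⁻¹ * (1 - exp (-(t/2))) := by
    rw [hu, setIntegral_indicator measurableSet_Ioc]
    have : Set.Ioi (0:ℝ) ∩ Set.Ioc 0 (Real.sqrt t) = Set.Ioc 0 (Real.sqrt t) := by
      rw [Set.inter_eq_right]
      exact fun x hx => hx.1
    rw [this, int_radial _ t ht]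
  have hI2 : ∫ θ in Set.Ioo (-π) π, v θ = π/2 := by
    rw [hv, setIntegral_indicator measurableSet_Ioo]
    have : Set.Ioo (-π) π ∩ Set.Ioo 0 (π/2) = Set.Ioo 0 (π/2) := by
      rw [Set.inter_eq_right]
      intro x hx
      exact ⟨by linarith [hx.1], by linarith [hx.2]⟩
    rw [this]
    simp only [integral_const, smul_eq_mul, mul_one, Measure.restrict_apply_univ,
      Real.volume_Ioo]
    rw [measureReal_def, Measure.restrict_apply_univ, Real.volume_Ioo, ENNReal.toReal_ofReal (by linarith)]
    ring
  rw [hI1, hI2]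
  field_simp
  ring


lemma sq_le_iff_of_pos {x t : ℝ} (hx : 0 < x) (ht : 0 ≤ t) :
    x^2 ≤ t ↔ x ≤ Real.sqrt t := (Real.le_sqrt hx.le ht).symm

lemma sq_le_iff_of_nonpos {x t : ℝ} (hx : x ≤ 0) (ht : 0 ≤ t) :
    x^2 ≤ t ↔ -Real.sqrt t ≤ x := by
  rw [show x^2 = (-x)^2 by ring, ← Real.le_sqrt (by linarith : (0:ℝ) ≤ -x) ht]
  constructor <;> intro h <;> linarith

lemma mem_decomp {t : ℝ} (ht : 0 ≤ t) (x y : ℝ) :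
    (if 0 < x then (if 0 < y then x^2 + y^2 else x^2)
      else (if 0 < y then y^2 else min (x^2) (y^2))) ≤ t
    ↔ (x, y) ∈ ({p : ℝ × ℝ | 0 < p.1 ∧ 0 < p.2 ∧ p.1^2 + p.2^2 ≤ t}
        ∪ Set.Ioc 0 (Real.sqrt t) ×ˢ Set.Iic 0
        ∪ Set.Iic 0 ×ˢ Set.Ioc 0 (Real.sqrt t)
        ∪ (Set.Iic 0 ×ˢ Set.Iic 0 \ Set.Iio (-Real.sqrt t) ×ˢ Set.Iio (-Real.sqrt t))) := by
  simp only [Set.mem_union, Set.mem_setOf_eq, Set.mem_prod, Set.mem_Ioc, Set.mem_Iic,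
    Set.mem_diff, Set.mem_Iio]
  by_cases hx : 0 < x <;> by_cases hy : 0 < y
  · rw [if_pos hx, if_pos hy]
    constructor
    · intro h; exact Or.inl (Or.inl (Or.inl ⟨hx, hy, h⟩))
    · rintro (((⟨_, _, h⟩ | ⟨_, h2⟩) | ⟨h1, _⟩) | ⟨⟨h1, _⟩, _⟩) <;> first | exact h | linarith
  · rw [if_pos hx, if_neg hy]
    rw [sq_le_iff_of_pos hx ht]
    constructor
    · intro h; exact Or.inl (Or.inl (Or.inr ⟨⟨hx, h⟩, le_of_not_gt hy⟩))
    · rintro (((⟨_, h2, _⟩ | ⟨⟨_, h⟩, _⟩) | ⟨h1, _⟩) | ⟨⟨h1, _⟩, _⟩) <;>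
        first | exact h | linarith
  · rw [if_neg hx, if_pos hy, sq_le_iff_of_pos hy ht]
    constructor
    · intro h; exact Or.inl (Or.inr ⟨le_of_not_gt hx, hy, h⟩)
    · rintro (((⟨h1, _, _⟩ | ⟨⟨h1, _⟩, _⟩) | ⟨_, _, h⟩) | ⟨⟨_, h2⟩, _⟩) <;>
        first | exact h | linarith
  · rw [if_neg hx, if_neg hy]
    have hx' := le_of_not_gt hx
    have hy' := le_of_not_gt hy
    rw [min_le_iff, sq_le_iff_of_nonpos hx' ht, sq_le_iff_of_nonpos hy' ht]
    constructor
    · intro h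
      refine Or.inr ⟨⟨hx', hy'⟩, ?_⟩
      rintro ⟨ha, hb⟩
      rcases h with h | h <;> linarith
    · rintro (((⟨h1, _, _⟩ | ⟨⟨h1, _⟩, _⟩) | ⟨_, h2, _⟩) | ⟨_, hno⟩)
      · linarith
      · linarith
      · linarith
      · by_contra hcon
        push_neg at hcon
        exact hno ⟨by linarith [hcon.1], by linarith [hcon.2]⟩

/-- The chi-bar-squared distribution for two arms: if `T` equals
`Z₁² + Z₂²`, `Z₁²`, `Z₂²`, or `min(Z₁², Z₂²)` according to the signs of `Z₁, Z₂`,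
then `P(T ≤ t) = (1/4) F₂(t) + F₁(t) - (1/4) F₁(t)²`. -/
theorem chi_bar_squared_cdf_two {Ω : Type*} [MeasurableSpace Ω]
    (μ : Measure Ω) [IsProbabilityMeasure μ]
    (Z1 Z2 : Ω → ℝ) (hm1 : Measurable Z1) (hm2 : Measurable Z2)
    (h1 : μ.map Z1 = gaussianReal 0 1) (h2 : μ.map Z2 = gaussianReal 0 1)
    (hindep : IndepFun Z1 Z2 μ)
    (T : Ω → ℝ)
    (hT : ∀ ω, T ω =
      if 0 < Z1 ω then (if 0 < Z2 ω then Z1 ω ^ 2 + Z2 ω ^ 2 else Z1 ω ^ 2)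
      else (if 0 < Z2 ω then Z2 ω ^ 2 else min (Z1 ω ^ 2) (Z2 ω ^ 2))) :
    ∀ t : ℝ, 0 ≤ t →
      (μ {ω | T ω ≤ t}).toReal
        = (1 / 4) * chiSqCDF 2 t + chiSqCDF 1 t - (1 / 4) * chiSqCDF 1 t ^ 2 := by
  intro t ht
  set s := Real.sqrt t with hs
  have hs0 : 0 ≤ s := Real.sqrt_nonneg t
  set ν := gaussianReal 0 1 with hν
  set S1 : Set (ℝ × ℝ) := {p : ℝ × ℝ | 0 < p.1 ∧ 0 < p.2 ∧ p.1^2 + p.2^2 ≤ t} with hS1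
  set S2 : Set (ℝ × ℝ) := Set.Ioc 0 s ×ˢ Set.Iic 0 with hS2
  set S3 : Set (ℝ × ℝ) := Set.Iic 0 ×ˢ Set.Ioc 0 s with hS3
  set S4 : Set (ℝ × ℝ) := Set.Iic 0 ×ˢ Set.Iic 0 \ Set.Iio (-s) ×ˢ Set.Iio (-s) with hS4
  have hS1m : MeasurableSet S1 := quarter_meas
  have hS2m : MeasurableSet S2 := measurableSet_Ioc.prod measurableSet_Iic
  have hS3m : MeasurableSet S3 := measurableSet_Iic.prod measurableSet_Ioc
  have hS4m : MeasurableSet S4 :=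
    (measurableSet_Iic.prod measurableSet_Iic).diff (measurableSet_Iio.prod measurableSet_Iio)
  have hSm : MeasurableSet (S1 ∪ S2 ∪ S3 ∪ S4) := ((hS1m.union hS2m).union hS3m).union hS4m
  have hset : {ω | T ω ≤ t} = (fun ω => (Z1 ω, Z2 ω)) ⁻¹' (S1 ∪ S2 ∪ S3 ∪ S4) := by
    ext ω
    simp only [Set.mem_setOf_eq, Set.mem_preimage, hT ω]
    exact mem_decomp ht (Z1 ω) (Z2 ω)
  have hmap : μ.map (fun ω => (Z1 ω, Z2 ω)) = ν.prod ν := by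
    rw [(indepFun_iff_map_prod_eq_prod_map_map hm1.aemeasurable hm2.aemeasurable).mp hindep,
      h1, h2]
  have hμ : μ {ω | T ω ≤ t} = (ν.prod ν) (S1 ∪ S2 ∪ S3 ∪ S4) := by
    rw [hset, ← hmap, Measure.map_apply (hm1.prodMk hm2) hSm]
  have d12 : Disjoint S1 S2 := by
    rw [Set.disjoint_left]
    rintro p ⟨_, hp2, _⟩ hq
    exact absurd (Set.mem_Iic.mp hq.2) (not_le.mpr hp2)
  have d12_3 : Disjoint (S1 ∪ S2) S3 := by
    rw [Set.disjoint_left]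
    rintro p (⟨hp1, _, _⟩ | hq) hr
    · exact absurd (Set.mem_Iic.mp hr.1) (not_le.mpr hp1)
    · exact absurd (Set.mem_Iic.mp hr.1) (not_le.mpr (Set.mem_Ioc.mp hq.1).1)
  have d123_4 : Disjoint (S1 ∪ S2 ∪ S3) S4 := by
    rw [Set.disjoint_left]
    rintro p ((⟨hp1, _, _⟩ | hq) | hq) hr
    · exact absurd (Set.mem_Iic.mp hr.1.1) (not_le.mpr hp1)
    · exact absurd (Set.mem_Iic.mp hr.1.1) (not_le.mpr (Set.mem_Ioc.mp hq.1).1)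
    · exact absurd (Set.mem_Iic.mp hr.1.2) (not_le.mpr (Set.mem_Ioc.mp hq.2).1)
  have hadd : (ν.prod ν) (S1 ∪ S2 ∪ S3 ∪ S4)
      = (ν.prod ν) S1 + (ν.prod ν) S2 + (ν.prod ν) S3 + (ν.prod ν) S4 := by
    rw [measure_union d123_4 hS4m, measure_union d12_3 hS3m, measure_union d12 hS2m]
  set G := ∫ x in Set.Ioc 0 s, gaussianPDFReal 0 1 x with hG
  have hGnn : 0 ≤ G := integral_nonneg fun _ => gaussianPDFReal_nonneg 0 1 _
  have hG2 : (1:ℝ)/2 - G = ∫ x in Set.Ioi s, gaussianPDFReal 0 1 x :=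
    (int_gauss_Ioi s hs0).symm
  have hG2nn : 0 ≤ (1:ℝ)/2 - G := by
    rw [hG2]
    exact integral_nonneg fun _ => gaussianPDFReal_nonneg 0 1 _
  have hνIoc : ν (Set.Ioc 0 s) = ENNReal.ofReal G := by
    rw [hν, gaussianReal_apply_eq_integral 0 (by norm_num), hG]
  have hνIic : ν (Set.Iic 0) = ENNReal.ofReal (1/2) := by
    rw [hν, gaussianReal_apply_eq_integral 0 (by norm_num), int_gauss_Iic_zero]
  have hνIio : ν (Set.Iio (-s)) = ENNReal.ofReal (1/2 - G) := by
    rw [hν, gaussianReal_apply_eq_integral 0 (by norm_num), int_gauss_Iio_neg,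
      int_gauss_Ioi s hs0, hG]
  have fin : ∀ X : Set (ℝ × ℝ), (ν.prod ν) X ≠ ⊤ := fun X => measure_ne_top _ _
  have v1 : ((ν.prod ν) S1).toReal = 1/4 * (1 - exp (-(t/2))) := by
    rw [hν, hS1]
    exact quarter_toReal t ht
  have v2 : ((ν.prod ν) S2).toReal = G * (1/2) := by
    rw [hS2, Measure.prod_prod, hνIoc, hνIic, ← ENNReal.ofReal_mul hGnn,
      ENNReal.toReal_ofReal (by positivity)]
  have v3 : ((ν.prod ν) S3).toReal = (1/2) * G := by
    rw [hS3, Measure.prod_prod, hνIoc, hνIic, ← ENNReal.ofReal_mul (by norm_num : (0:ℝ) ≤ 1/2),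
      ENNReal.toReal_ofReal (by positivity)]
  have hsubset : Set.Iio (-s) ×ˢ Set.Iio (-s) ⊆ Set.Iic 0 ×ˢ Set.Iic 0 := by
    apply Set.prod_mono <;> intro x hx <;>
      exact Set.mem_Iic.mpr (le_trans (le_of_lt (Set.mem_Iio.mp hx)) (by linarith))
  have v4 : ((ν.prod ν) S4).toReal = 1/4 - (1/2 - G) * (1/2 - G) := by
    rw [hS4, measure_diff hsubset
      (measurableSet_Iio.prod measurableSet_Iio).nullMeasurableSet (fin _),
      Measure.prod_prod, Measure.prod_prod, hνIic, hνIio,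
      ← ENNReal.ofReal_mul (by norm_num : (0:ℝ) ≤ 1/2), ← ENNReal.ofReal_mul hG2nn,
      ENNReal.toReal_sub_of_le (ENNReal.ofReal_le_ofReal (by nlinarith)) ENNReal.ofReal_ne_top,
      ENNReal.toReal_ofReal (by norm_num), ENNReal.toReal_ofReal (mul_nonneg hG2nn hG2nn)]
    norm_num
  have hc1 : chiSqCDF 1 t = 2 * G := by
    rw [chiSqCDF_one t ht, hG, hs]
  have hc2 : chiSqCDF 2 t = 1 - exp (-(t/2)) := chiSqCDF_two t ht
  rw [hμ, hadd, ENNReal.toReal_add (by simp [fin]) (fin _),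
    ENNReal.toReal_add (by simp [fin]) (fin _), ENNReal.toReal_add (fin _) (fin _),
    v1, v2, v3, v4, hc1, hc2]
  ring
end

section
/- In the two-fold cross-fitting setup at the kink, let $\hat\mu^{(\ell)}_j$ for $j,\ell \in \{1,2\}$ be four independent $N(0, 1/m)$ random variables, $I^{(\ell)} = \mathbf{1}\{\hat\mu^{(\ell)}_1 > \hat\mu^{(\ell)}_2\}$, $\hat\theta^{(1)} = I^{(1)}\hat\mu^{(2)}_1 + (1-I^{(1)})\hat\mu^{(2)}_2$, and $\hat\theta^{(2)} = I^{(2)}\hat\mu^{(1)}_1 + (1-I^{(2)})\hat\mu^{(1)}_2$. Then $\mathrm{Cov}(\hat\theta^{(1)}, \hat\theta^{(2)}) = \frac{1}{\pi m}$ and $\mathrm{Corr}(\hat\theta^{(1)}, \hat\theta^{(2)}) = \frac{1}{\pi}$. -/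
open MeasureTheory ProbabilityTheory Real

open Filter Set
open scoped NNReal ENNReal Topology

namespace Crossfit

variable {V : ℝ≥0}

noncomputable def gpdf (V : ℝ≥0) (x : ℝ) : ℝ := gaussianPDFReal 0 V x

noncomputable def Phi (V : ℝ≥0) (x : ℝ) : ℝ := ∫ t in Iic x, gpdf V t

lemma gpdf_eq (x : ℝ) :
    gpdf V x = (Real.sqrt (2 * π * V))⁻¹ * Real.exp (-(2*(V:ℝ))⁻¹ * x^2) := by
  simp only [gpdf, gaussianPDFReal, sub_zero]
  ring_nf

lemma gpdf_nonneg (x : ℝ) : 0 ≤ gpdf V x := gaussianPDFReal_nonneg 0 V x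

lemma gpdf_measurable : Measurable (gpdf V) := measurable_gaussianPDFReal 0 V

lemma gpdf_continuous : Continuous (gpdf V) := by
  rw [funext (gpdf_eq (V := V))]
  fun_prop

variable (hV : 0 < (V:ℝ))
include hV

lemma gpdf_integrable : Integrable (gpdf V) := integrable_gaussianPDFReal 0 V

lemma gpdf_integral : ∫ x, gpdf V x = 1 := by
  refine integral_gaussianPDFReal_eq_one 0 (by exact_mod_cast hV.ne')

lemma gpdf_hasDerivAt (x : ℝ) :
    HasDerivAt (gpdf V) (-(x / V) * gpdf V x) x := by
  have h1 : HasDerivAt (fun x : ℝ => -(2*(V:ℝ))⁻¹ * x^2) (-(2*(V:ℝ))⁻¹ * (2*x)) x := by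
    simpa using ((hasDerivAt_pow 2 x).const_mul (-(2*(V:ℝ))⁻¹))
  have h2 := (h1.exp).const_mul (Real.sqrt (2 * π * V))⁻¹
  have : (Real.sqrt (2 * π * V))⁻¹ * (Real.exp (-(2*(V:ℝ))⁻¹ * x^2) * (-(2*(V:ℝ))⁻¹ * (2*x)))
      = -(x / V) * gpdf V x := by
    rw [gpdf_eq]
    field_simp
  rw [this] at h2
  have hfe : (fun x => (Real.sqrt (2 * π * V))⁻¹ * Real.exp (-(2*(V:ℝ))⁻¹ * x^2)) = gpdf V :=
    (funext (gpdf_eq (V := V))).symm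
  rwa [hfe] at h2

lemma xgpdf_integrable : Integrable (fun x => x * gpdf V x) := by
  have hb : 0 < (2*(V:ℝ))⁻¹ := by positivity
  have := (integrable_mul_exp_neg_mul_sq hb).const_mul (Real.sqrt (2 * π * V))⁻¹
  refine this.congr (Eventually.of_forall fun x => ?_)
  simp only [gpdf_eq]
  ring_nf

lemma x2gpdf_integrable : Integrable (fun x => x^2 * gpdf V x) := by
  have hb : 0 < (2*(V:ℝ))⁻¹ := by positivity
  have h := (integrable_rpow_mul_exp_neg_mul_sq hb (by norm_num : (-1:ℝ) < 2)).const_mul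
    (Real.sqrt (2 * π * V))⁻¹
  refine h.congr (Eventually.of_forall fun x => ?_)
  simp only [gpdf_eq]
  have : x ^ (2:ℝ) = x ^ 2 := by
    rw [show (2:ℝ) = ((2:ℕ):ℝ) by norm_num, Real.rpow_natCast]
  rw [this]
  ring_nf

lemma gpdf_le (x : ℝ) : gpdf V x ≤ (Real.sqrt (2 * π * V))⁻¹ := by
  rw [gpdf_eq]
  have h1 : Real.exp (-(2*(V:ℝ))⁻¹ * x^2) ≤ 1 := by
    rw [Real.exp_le_one_iff]
    have : 0 ≤ (2*(V:ℝ))⁻¹ * x^2 := by positivity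
    nlinarith
  have h2 : (0:ℝ) ≤ (Real.sqrt (2 * π * V))⁻¹ := by positivity
  nlinarith

lemma gpdf_sq_integrable : Integrable (fun x => gpdf V x * gpdf V x) := by
  refine (((gpdf_integrable hV).const_mul (Real.sqrt (2 * π * V))⁻¹).mono'
    (((gpdf_measurable).mul (gpdf_measurable)).aestronglyMeasurable) ?_)
  refine Eventually.of_forall fun x => ?_
  rw [Real.norm_eq_abs, abs_of_nonneg (mul_nonneg (gpdf_nonneg x) (gpdf_nonneg x))]
  have := gpdf_le (V := V) hV x
  nlinarith [gpdf_nonneg (V := V) x]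

lemma exp_term_tendsto_atTop :
    Tendsto (fun x : ℝ => Real.exp (-(2*(V:ℝ))⁻¹ * x^2)) atTop (𝓝 0) := by
  have hx2 : Tendsto (fun x : ℝ => x ^ 2) atTop atTop :=
    tendsto_pow_atTop two_ne_zero
  have h1 : Tendsto (fun x : ℝ => -(2*(V:ℝ))⁻¹ * x^2) atTop atBot :=
    (tendsto_const_mul_atBot_of_neg (by rw [neg_lt_zero]; positivity)).2 hx2
  exact Real.tendsto_exp_atBot.comp h1

lemma exp_term_tendsto_atBot :
    Tendsto (fun x : ℝ => Real.exp (-(2*(V:ℝ))⁻¹ * x^2)) atBot (𝓝 0) := by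
  have hx2 : Tendsto (fun x : ℝ => x ^ 2) atBot atTop := by
    have h := (tendsto_pow_atTop (n := 2) two_ne_zero).comp
      (tendsto_neg_atBot_atTop (G := ℝ))
    exact h.congr fun x => neg_sq x
  have h1 : Tendsto (fun x : ℝ => -(2*(V:ℝ))⁻¹ * x^2) atBot atBot :=
    (tendsto_const_mul_atBot_of_neg (by rw [neg_lt_zero]; positivity)).2 hx2
  exact Real.tendsto_exp_atBot.comp h1

lemma gpdf_tendsto_atTop : Tendsto (gpdf V) atTop (𝓝 0) := by
  have h3 := (exp_term_tendsto_atTop (V := V) hV).const_mul (Real.sqrt (2 * π * V))⁻¹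
  rw [mul_zero] at h3
  exact h3.congr fun x => (gpdf_eq x).symm

lemma gpdf_tendsto_atBot : Tendsto (gpdf V) atBot (𝓝 0) := by
  have h3 := (exp_term_tendsto_atBot (V := V) hV).const_mul (Real.sqrt (2 * π * V))⁻¹
  rw [mul_zero] at h3
  exact h3.congr fun x => (gpdf_eq x).symm

lemma xgpdf_tendsto_atTop : Tendsto (fun x => x * gpdf V x) atTop (𝓝 0) := by
  have hb : 0 < (2*(V:ℝ))⁻¹ := by positivity
  have ho := rpow_mul_exp_neg_mul_sq_isLittleO_exp_neg hb 1
  have h0 : Tendsto (fun x : ℝ => Real.exp (-(1/2) * x)) atTop (𝓝 0) :=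
    Real.tendsto_exp_atBot.comp
      ((tendsto_const_mul_atBot_of_neg (by norm_num)).2 tendsto_id)
  have h1 : Tendsto (fun x : ℝ => x ^ (1:ℝ) * Real.exp (-(2*(V:ℝ))⁻¹ * x^2)) atTop (𝓝 0) :=
    ho.trans_tendsto h0
  have h2 := h1.const_mul (Real.sqrt (2 * π * V))⁻¹
  rw [mul_zero] at h2
  refine h2.congr fun x => ?_
  simp only [Real.rpow_one, gpdf_eq]
  ring

lemma xgpdf_tendsto_atBot : Tendsto (fun x => x * gpdf V x) atBot (𝓝 0) := by
  have h1 := (xgpdf_tendsto_atTop (V := V) hV).comp tendsto_neg_atBot_atTop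
  have h2 := h1.neg
  rw [neg_zero] at h2
  refine h2.congr fun x => ?_
  simp only [Function.comp]
  have : gpdf V (-x) = gpdf V x := by
    simp only [gpdf_eq]; ring_nf
  rw [this]
  ring

omit hV in
lemma Phi_nonneg (x : ℝ) : 0 ≤ Phi V x :=
  setIntegral_nonneg measurableSet_Iic (fun t _ => gpdf_nonneg t)

lemma Phi_le_one (x : ℝ) : Phi V x ≤ 1 := by
  rw [← gpdf_integral hV]
  exact setIntegral_le_integral (gpdf_integrable hV)
    (Eventually.of_forall fun t => gpdf_nonneg t)

lemma Phi_hasDerivAt (x : ℝ) : HasDerivAt (Phi V) (gpdf V x) x := by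
  have hint : Integrable (gpdf V) := gpdf_integrable hV
  have heq : ∀ u : ℝ, Phi V u = Phi V 0 + ∫ t in (0:ℝ)..u, gpdf V t := by
    intro u
    have h := intervalIntegral.integral_Iic_sub_Iic (μ := volume) (f := gpdf V)
      hint.integrableOn hint.integrableOn (a := 0) (b := u)
    simp only [Phi]
    linarith [h]
  have hd : HasDerivAt (fun u : ℝ => ∫ t in (0:ℝ)..u, gpdf V t) (gpdf V x) x :=
    intervalIntegral.integral_hasDerivAt_right (hint.intervalIntegrable)
      ((gpdf_continuous (V := V)).stronglyMeasurableAtFilter _ _)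
      (gpdf_continuous (V := V)).continuousAt
  have := hd.const_add (Phi V 0)
  exact this.congr_of_eventuallyEq (Eventually.of_forall fun u => (heq u))

lemma Phi_continuous : Continuous (Phi V) :=
  continuous_iff_continuousAt.2 fun x => (Phi_hasDerivAt hV x).continuousAt

lemma integral_xgpdf : ∫ x, x * gpdf V x = 0 := by
  have hd : ∀ x, HasDerivAt (fun x => -(V:ℝ) * gpdf V x) (x * gpdf V x) x := by
    intro x
    have h := (gpdf_hasDerivAt hV x).const_mul (-(V:ℝ))
    refine h.congr_deriv ?_
    have hc : (V:ℝ) * (x / V) = x := mul_div_cancel₀ x hV.ne'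
    linear_combination gpdf V x * hc
  have ht := (gpdf_tendsto_atTop hV).const_mul (-(V:ℝ))
  have hb := (gpdf_tendsto_atBot hV).const_mul (-(V:ℝ))
  rw [mul_zero] at ht hb
  have := MeasureTheory.integral_of_hasDerivAt_of_tendsto hd (xgpdf_integrable hV) hb ht
  simpa using this

lemma integral_x2gpdf : ∫ x, x ^ 2 * gpdf V x = (V : ℝ) := by
  have hd : ∀ x, HasDerivAt (fun x => -(V:ℝ) * (x * gpdf V x))
      (x ^ 2 * gpdf V x - (V:ℝ) * gpdf V x) x := by
    intro x
    have h1 : HasDerivAt (fun x : ℝ => x * gpdf V x)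
        (1 * gpdf V x + x * (-(x / V) * gpdf V x)) x :=
      (hasDerivAt_id x).mul (gpdf_hasDerivAt hV x)
    have h2 := h1.const_mul (-(V:ℝ))
    refine h2.congr_deriv ?_
    have hc : (V:ℝ) * (x / V) = x := mul_div_cancel₀ x hV.ne'
    linear_combination x * gpdf V x * hc
  have hInt : Integrable (fun x => x ^ 2 * gpdf V x - (V:ℝ) * gpdf V x) :=
    (x2gpdf_integrable hV).sub ((gpdf_integrable hV).const_mul _)
  have ht := (xgpdf_tendsto_atTop hV).const_mul (-(V:ℝ))
  have hb := (xgpdf_tendsto_atBot hV).const_mul (-(V:ℝ))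
  rw [mul_zero] at ht hb
  have h0 := MeasureTheory.integral_of_hasDerivAt_of_tendsto hd hInt hb ht
  rw [sub_zero] at h0
  have h1 := integral_sub (x2gpdf_integrable hV) ((gpdf_integrable hV).const_mul (V:ℝ))
  rw [h0] at h1
  have h2 : ∫ x, (V:ℝ) * gpdf V x = (V:ℝ) := by
    rw [integral_const_mul, gpdf_integral hV, mul_one]
  linarith [h1, h2]

lemma integral_gpdf_sq : ∫ x, gpdf V x * gpdf V x = (2 * Real.sqrt (π * V))⁻¹ := by
  have h1 : ∀ x : ℝ, gpdf V x * gpdf V x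
      = (2 * π * (V:ℝ))⁻¹ * Real.exp (-(V:ℝ)⁻¹ * x ^ 2) := by
    intro x
    rw [gpdf_eq]
    have hs : Real.sqrt (2 * π * V) * Real.sqrt (2 * π * V) = 2 * π * V :=
      Real.mul_self_sqrt (by positivity)
    rw [mul_mul_mul_comm, ← mul_inv, hs, ← Real.exp_add]
    congr 1
    field_simp
    ring
  simp_rw [h1]
  rw [integral_const_mul, integral_gaussian]
  have hπV : π / (V:ℝ)⁻¹ = π * V := by field_simp
  rw [hπV]
  have hs : Real.sqrt (π * V) * Real.sqrt (π * V) = π * V :=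
    Real.mul_self_sqrt (by positivity)
  have hpos : 0 < Real.sqrt (π * (V:ℝ)) := Real.sqrt_pos.2 (by positivity)
  have hp : Real.sqrt π * Real.sqrt π = π := Real.mul_self_sqrt Real.pi_pos.le
  have hv2 : Real.sqrt (V:ℝ) * Real.sqrt (V:ℝ) = (V:ℝ) := Real.mul_self_sqrt hV.le
  field_simp
  nlinarith [hs, hp, hv2, hpos.le, Real.sqrt_nonneg π, Real.sqrt_nonneg (V:ℝ)]

lemma integrable_Phi_xgpdf : Integrable (fun x => Phi V x * (-(x / V) * gpdf V x)) := by
  refine (((xgpdf_integrable hV).abs.mul_const (V:ℝ)⁻¹).mono'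
    ((Phi_continuous hV).mul ((by fun_prop : Continuous (fun x : ℝ => -(x / V))).mul
      gpdf_continuous)).aestronglyMeasurable ?_)
  refine Eventually.of_forall fun x => ?_
  rw [Real.norm_eq_abs, abs_mul, abs_mul, abs_of_nonneg (Phi_nonneg x),
    abs_of_nonneg (gpdf_nonneg x), abs_mul, abs_of_nonneg (gpdf_nonneg x)]
  have h1 : |(-(x / V))| = |x| * (V:ℝ)⁻¹ := by
    rw [abs_neg, abs_div, abs_of_nonneg hV.le]
    ring
  rw [h1]
  have := Phi_le_one hV x
  have := Phi_nonneg (V := V) x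
  have := gpdf_nonneg (V := V) x
  have : 0 ≤ |x| * (V:ℝ)⁻¹ * gpdf V x := by positivity
  nlinarith [abs_nonneg x, gpdf_nonneg (V := V) x, inv_nonneg.2 hV.le]

lemma integral_xPhig : ∫ x, x * Phi V x * gpdf V x = Real.sqrt V / (2 * Real.sqrt π) := by
  set F' : ℝ → ℝ := fun x => gpdf V x * gpdf V x + Phi V x * (-(x / V) * gpdf V x) with hF'
  have hF : ∀ x, HasDerivAt (fun x => Phi V x * gpdf V x) (F' x) x := fun x =>
    (Phi_hasDerivAt hV x).mul (gpdf_hasDerivAt hV x)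
  have hintF' : Integrable F' := (gpdf_sq_integrable hV).add (integrable_Phi_xgpdf hV)
  have hFt : Tendsto (fun x => Phi V x * gpdf V x) atTop (𝓝 0) :=
    squeeze_zero (fun x => mul_nonneg (Phi_nonneg x) (gpdf_nonneg x))
      (fun x => mul_le_of_le_one_left (gpdf_nonneg x) (Phi_le_one hV x))
      (gpdf_tendsto_atTop hV)
  have hFb : Tendsto (fun x => Phi V x * gpdf V x) atBot (𝓝 0) :=
    squeeze_zero (fun x => mul_nonneg (Phi_nonneg x) (gpdf_nonneg x))
      (fun x => mul_le_of_le_one_left (gpdf_nonneg x) (Phi_le_one hV x))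
      (gpdf_tendsto_atBot hV)
  have h0 := MeasureTheory.integral_of_hasDerivAt_of_tendsto hF hintF' hFb hFt
  rw [sub_zero] at h0
  have hpt : ∀ x, x * Phi V x * gpdf V x
      = -(V:ℝ) * F' x + (V:ℝ) * (gpdf V x * gpdf V x) := by
    intro x
    rw [hF']
    field_simp
    ring
  have key : ∫ x, x * Phi V x * gpdf V x
      = ∫ x, (-(V:ℝ) * F' x + (V:ℝ) * (gpdf V x * gpdf V x)) :=
    integral_congr_ae (Eventually.of_forall hpt)
  rw [key, integral_add (hintF'.const_mul _) ((gpdf_sq_integrable hV).const_mul _),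
    integral_const_mul, integral_const_mul, h0, integral_gpdf_sq hV, mul_zero, zero_add]
  have h1 : Real.sqrt (π * V) = Real.sqrt π * Real.sqrt V :=
    Real.sqrt_mul (le_of_lt Real.pi_pos) _
  have h2 : Real.sqrt (V:ℝ) * Real.sqrt (V:ℝ) = (V:ℝ) := Real.mul_self_sqrt hV.le
  have hπ : 0 < Real.sqrt π := Real.sqrt_pos.2 Real.pi_pos
  have hv : 0 < Real.sqrt (V:ℝ) := Real.sqrt_pos.2 hV
  rw [h1]
  field_simp
  nlinarith [h2]

lemma var_ne_zero : V ≠ 0 := by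
  intro h
  rw [h] at hV
  simp at hV

lemma integral_gaussian_eq (f : ℝ → ℝ) :
    ∫ x, f x ∂(gaussianReal 0 V) = ∫ x, f x * gpdf V x := by
  rw [gaussianReal_of_var_ne_zero 0 (var_ne_zero hV)]
  have h : (gaussianPDF 0 V) = fun x => ((Real.toNNReal (gpdf V x) : ℝ≥0) : ℝ≥0∞) := rfl
  rw [h, integral_withDensity_eq_integral_smul (gpdf_measurable.real_toNNReal) f]
  congr 1
  funext x
  rw [NNReal.smul_def, smul_eq_mul, Real.coe_toNNReal _ (gpdf_nonneg x)]
  ring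

lemma integrable_gaussian_iff (f : ℝ → ℝ) :
    Integrable f (gaussianReal 0 V) ↔ Integrable (fun x => f x * gpdf V x) volume := by
  rw [gaussianReal_of_var_ne_zero 0 (var_ne_zero hV),
    integrable_withDensity_iff (measurable_gaussianPDF 0 V)
      (ae_of_all _ fun x => ENNReal.ofReal_lt_top)]
  have hpt : ∀ x : ℝ, f x * (gaussianPDF 0 V x).toReal = f x * gpdf V x := by
    intro x
    rw [gaussianPDF, show gaussianPDFReal 0 V = gpdf V from rfl,
      ENNReal.toReal_ofReal (gpdf_nonneg (V := V) x)]
  constructor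
  · intro h
    exact h.congr (Eventually.of_forall fun x => hpt x)
  · intro h
    exact h.congr (Eventually.of_forall fun x => (hpt x).symm)

lemma gauss_integral_id : ∫ x, x ∂(gaussianReal 0 V) = 0 := by
  rw [integral_gaussian_eq hV]
  exact integral_xgpdf hV

lemma gauss_integral_sq : ∫ x, x ^ 2 ∂(gaussianReal 0 V) = (V : ℝ) := by
  rw [integral_gaussian_eq hV]
  exact integral_x2gpdf hV

lemma gauss_integrable_id : Integrable (fun x : ℝ => x) (gaussianReal 0 V) :=
  (integrable_gaussian_iff hV _).2 (xgpdf_integrable hV)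

lemma gauss_integrable_sq : Integrable (fun x : ℝ => x ^ 2) (gaussianReal 0 V) :=
  (integrable_gaussian_iff hV _).2 (x2gpdf_integrable hV)

lemma xPhi_g_integrable : Integrable (fun x => x * Phi V x * gpdf V x) volume := by
  have hc : Continuous fun x : ℝ => x * Phi V x * gpdf V x :=
    (continuous_id.mul (Phi_continuous hV)).mul gpdf_continuous
  refine (xgpdf_integrable hV).abs.mono' hc.aestronglyMeasurable
    (Eventually.of_forall fun x => ?_)
  rw [Real.norm_eq_abs, abs_mul, abs_mul, abs_of_nonneg (Phi_nonneg x),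
    abs_of_nonneg (gpdf_nonneg x)]
  have h1 : |x * gpdf V x| = |x| * gpdf V x := by
    rw [abs_mul, abs_of_nonneg (gpdf_nonneg x)]
  rw [h1]
  nlinarith [Phi_le_one hV x, Phi_nonneg (V := V) x, abs_nonneg x, gpdf_nonneg (V := V) x,
    mul_nonneg (abs_nonneg x) (gpdf_nonneg (V := V) x)]

lemma gauss_integrable_xPhi : Integrable (fun x : ℝ => x * Phi V x) (gaussianReal 0 V) :=
  (integrable_gaussian_iff hV _).2 (xPhi_g_integrable hV)

lemma gauss_integral_xPhi :
    ∫ x, x * Phi V x ∂(gaussianReal 0 V) = Real.sqrt V / (2 * Real.sqrt π) := by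
  rw [integral_gaussian_eq hV]
  exact integral_xPhig hV

lemma gauss_integral_xPhi' :
    ∫ x, x * (1 - Phi V x) ∂(gaussianReal 0 V) = -(Real.sqrt V / (2 * Real.sqrt π)) := by
  have h : ∀ x : ℝ, x * (1 - Phi V x) = x - x * Phi V x := fun x => by ring
  rw [integral_congr_ae (Eventually.of_forall fun x => h x),
    integral_sub (gauss_integrable_id hV) (gauss_integrable_xPhi hV),
    gauss_integral_id hV, gauss_integral_xPhi hV]
  ring

lemma gauss_integrable_xPhi' :
    Integrable (fun x : ℝ => x * (1 - Phi V x)) (gaussianReal 0 V) := by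
  have h : ∀ x : ℝ, x * (1 - Phi V x) = x - x * Phi V x := fun x => by ring
  refine ((gauss_integrable_id hV).sub (gauss_integrable_xPhi hV)).congr
    (Eventually.of_forall fun x => (h x).symm)

lemma gauss_meas_Iio (x : ℝ) : ((gaussianReal 0 V) (Iio x)).toReal = Phi V x := by
  rw [gaussianReal_apply_eq_integral 0 (var_ne_zero hV) (Iio x),
    show gaussianPDFReal 0 V = gpdf V from rfl]
  rw [ENNReal.toReal_ofReal (setIntegral_nonneg measurableSet_Iio fun t _ => gpdf_nonneg t)]
  exact setIntegral_congr_set Iio_ae_eq_Iic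

lemma gauss_meas_Iic (x : ℝ) : ((gaussianReal 0 V) (Iic x)).toReal = Phi V x := by
  rw [gaussianReal_apply_eq_integral 0 (var_ne_zero hV) (Iic x),
    show gaussianPDFReal 0 V = gpdf V from rfl]
  rw [ENNReal.toReal_ofReal (setIntegral_nonneg measurableSet_Iic fun t _ => gpdf_nonneg t)]
  rfl

lemma gauss_meas_Ioi (x : ℝ) : ((gaussianReal 0 V) (Ioi x)).toReal = 1 - Phi V x := by
  have h : Ioi x = (Iic x)ᶜ := by simp
  rw [h, measure_compl measurableSet_Iic (measure_ne_top _ _)]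
  rw [measure_univ, ENNReal.toReal_sub_of_le prob_le_one ENNReal.one_ne_top,
    ENNReal.toReal_one, gauss_meas_Iic hV]

lemma gauss_meas_Ici (x : ℝ) : ((gaussianReal 0 V) (Ici x)).toReal = 1 - Phi V x := by
  have h : Ici x = (Iio x)ᶜ := by simp
  rw [h, measure_compl measurableSet_Iio (measure_ne_top _ _)]
  rw [measure_univ, ENNReal.toReal_sub_of_le prob_le_one ENNReal.one_ne_top,
    ENNReal.toReal_one, gauss_meas_Iio hV]

end Crossfit

namespace Crossfit

variable {V : ℝ≥0}

noncomputable def fA (p : ℝ × ℝ) : ℝ := if p.2 < p.1 then p.1 else 0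
noncomputable def fB (p : ℝ × ℝ) : ℝ := if p.2 < p.1 then p.2 else 0
noncomputable def fA' (p : ℝ × ℝ) : ℝ := if p.2 < p.1 then 0 else p.1
noncomputable def fB' (p : ℝ × ℝ) : ℝ := if p.2 < p.1 then 0 else p.2
noncomputable def fI (p : ℝ × ℝ) : ℝ := if p.2 < p.1 then 1 else 0
noncomputable def fI' (p : ℝ × ℝ) : ℝ := if p.2 < p.1 then 0 else 1

lemma mcond : MeasurableSet {p : ℝ × ℝ | p.2 < p.1} :=
  measurableSet_lt measurable_snd measurable_fst

lemma mfA : Measurable fA := Measurable.ite mcond measurable_fst measurable_const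
lemma mfB : Measurable fB := Measurable.ite mcond measurable_snd measurable_const
lemma mfA' : Measurable fA' := Measurable.ite mcond measurable_const measurable_fst
lemma mfB' : Measurable fB' := Measurable.ite mcond measurable_const measurable_snd
lemma mfI : Measurable fI := Measurable.ite mcond measurable_const measurable_const
lemma mfI' : Measurable fI' := Measurable.ite mcond measurable_const measurable_const

section Rho

variable (hV : 0 < (V:ℝ))
include hV

local notation "γ" => gaussianReal 0 V
local notation "ρ" => Measure.prod (gaussianReal 0 V) (gaussianReal 0 V)
local notation "aV" => Real.sqrt (V:ℝ) / (2 * Real.sqrt π)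

lemma rhoFst : Integrable (fun p : ℝ × ℝ => p.1) ρ := by
  have h := (gauss_integrable_id hV).mul_prod
    (integrable_const (1:ℝ) : Integrable _ (gaussianReal 0 V))
  simpa using h

lemma rhoSnd : Integrable (fun p : ℝ × ℝ => p.2) ρ := by
  have h := (integrable_const (1:ℝ) : Integrable _ (gaussianReal 0 V)).mul_prod
    (gauss_integrable_id hV)
  simpa using h

lemma rhoFstSq : Integrable (fun p : ℝ × ℝ => p.1 ^ 2) ρ := by
  have h := (gauss_integrable_sq hV).mul_prod
    (integrable_const (1:ℝ) : Integrable _ (gaussianReal 0 V))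
  simpa using h

lemma rhoSndSq : Integrable (fun p : ℝ × ℝ => p.2 ^ 2) ρ := by
  have h := (integrable_const (1:ℝ) : Integrable _ (gaussianReal 0 V)).mul_prod
    (gauss_integrable_sq hV)
  simpa using h

lemma rhoFst_val : ∫ p : ℝ × ℝ, p.1 ∂ρ = 0 := by
  rw [show (fun p : ℝ × ℝ => p.1) = fun p : ℝ × ℝ => (fun x : ℝ => x) p.1 * (fun _ : ℝ => (1:ℝ)) p.2
    from by funext p; simp,
    integral_prod_mul (μ := gaussianReal 0 V) (ν := gaussianReal 0 V)
      (fun x : ℝ => x) (fun _ : ℝ => (1:ℝ))]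
  simp [gauss_integral_id hV]

lemma rhoSnd_val : ∫ p : ℝ × ℝ, p.2 ∂ρ = 0 := by
  rw [show (fun p : ℝ × ℝ => p.2) = fun p : ℝ × ℝ => (fun _ : ℝ => (1:ℝ)) p.1 * (fun x : ℝ => x) p.2
    from by funext p; simp,
    integral_prod_mul (μ := gaussianReal 0 V) (ν := gaussianReal 0 V)
      (fun _ : ℝ => (1:ℝ)) (fun x : ℝ => x)]
  simp [gauss_integral_id hV]

lemma rhoFstSq_val : ∫ p : ℝ × ℝ, p.1 ^ 2 ∂ρ = (V:ℝ) := by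
  rw [show (fun p : ℝ × ℝ => p.1 ^ 2)
      = fun p : ℝ × ℝ => (fun x : ℝ => x ^ 2) p.1 * (fun _ : ℝ => (1:ℝ)) p.2
    from by funext p; simp,
    integral_prod_mul (μ := gaussianReal 0 V) (ν := gaussianReal 0 V)
      (fun x : ℝ => x ^ 2) (fun _ : ℝ => (1:ℝ))]
  simp [gauss_integral_sq hV]

lemma rhoSndSq_val : ∫ p : ℝ × ℝ, p.2 ^ 2 ∂ρ = (V:ℝ) := by
  rw [show (fun p : ℝ × ℝ => p.2 ^ 2)
      = fun p : ℝ × ℝ => (fun _ : ℝ => (1:ℝ)) p.1 * (fun x : ℝ => x ^ 2) p.2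
    from by funext p; simp,
    integral_prod_mul (μ := gaussianReal 0 V) (ν := gaussianReal 0 V)
      (fun _ : ℝ => (1:ℝ)) (fun x : ℝ => x ^ 2)]
  simp [gauss_integral_sq hV]

lemma ifA : Integrable fA ρ := by
  refine (rhoFst hV).abs.mono' mfA.aestronglyMeasurable (Eventually.of_forall fun p => ?_)
  rw [Real.norm_eq_abs, fA]
  split_ifs
  · exact le_refl _
  · simp [abs_nonneg]

lemma ifB : Integrable fB ρ := by
  refine (rhoSnd hV).abs.mono' mfB.aestronglyMeasurable (Eventually.of_forall fun p => ?_)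
  rw [Real.norm_eq_abs, fB]
  split_ifs
  · exact le_refl _
  · simp [abs_nonneg]

lemma ifA' : Integrable fA' ρ := by
  refine (rhoFst hV).abs.mono' mfA'.aestronglyMeasurable (Eventually.of_forall fun p => ?_)
  rw [Real.norm_eq_abs, fA']
  split_ifs
  · simp [abs_nonneg]
  · exact le_refl _

lemma ifB' : Integrable fB' ρ := by
  refine (rhoSnd hV).abs.mono' mfB'.aestronglyMeasurable (Eventually.of_forall fun p => ?_)
  rw [Real.norm_eq_abs, fB']
  split_ifs
  · simp [abs_nonneg]
  · exact le_refl _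

omit hV in
lemma ifI : Integrable fI ρ := by
  refine (integrable_const (1:ℝ)).mono' mfI.aestronglyMeasurable (Eventually.of_forall fun p => ?_)
  rw [Real.norm_eq_abs, fI]
  split_ifs <;> simp

omit hV in
lemma ifI' : Integrable fI' ρ := by
  refine (integrable_const (1:ℝ)).mono' mfI'.aestronglyMeasurable (Eventually.of_forall fun p => ?_)
  rw [Real.norm_eq_abs, fI']
  split_ifs <;> simp

lemma intfI_add_fI' : (∫ p, fI p ∂ρ) + (∫ p, fI' p ∂ρ) = 1 := by
  rw [← integral_add ifI ifI']
  have h : ∀ p : ℝ × ℝ, fI p + fI' p = 1 := by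
    intro p
    rw [fI, fI']
    split_ifs <;> norm_num
  rw [integral_congr_ae (Eventually.of_forall h)]
  simp

lemma intfA : ∫ p, fA p ∂ρ = aV := by
  rw [integral_prod _ (ifA hV)]
  have hinner : ∀ x : ℝ, (∫ y, fA (x, y) ∂γ) = Phi V x * x := by
    intro x
    have h : ∀ y : ℝ, fA (x, y) = (Iio x).indicator (fun _ => x) y := by
      intro y
      by_cases hy : y < x <;> simp [fA, Set.indicator, mem_Iio, hy]
    rw [integral_congr_ae (Eventually.of_forall h), integral_indicator_const x measurableSet_Iio,
      measureReal_def, gauss_meas_Iio hV, smul_eq_mul]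
  rw [integral_congr_ae (Eventually.of_forall hinner)]
  rw [integral_congr_ae (Eventually.of_forall fun x => mul_comm (Phi V x) x)]
  exact gauss_integral_xPhi hV

lemma intfA' : ∫ p, fA' p ∂ρ = -aV := by
  rw [integral_prod _ (ifA' hV)]
  have hinner : ∀ x : ℝ, (∫ y, fA' (x, y) ∂γ) = (1 - Phi V x) * x := by
    intro x
    have h : ∀ y : ℝ, fA' (x, y) = (Ici x).indicator (fun _ => x) y := by
      intro y
      by_cases hy : y < x
      · simp [fA', Set.indicator, mem_Ici, hy, not_le.2 hy]
      · simp [fA', Set.indicator, mem_Ici, hy, not_lt.1 hy]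
    rw [integral_congr_ae (Eventually.of_forall h), integral_indicator_const x measurableSet_Ici,
      measureReal_def, gauss_meas_Ici hV, smul_eq_mul]
  rw [integral_congr_ae (Eventually.of_forall hinner)]
  rw [integral_congr_ae (Eventually.of_forall fun x => mul_comm (1 - Phi V x) x)]
  exact gauss_integral_xPhi' hV

lemma intfB : ∫ p, fB p ∂ρ = -aV := by
  rw [integral_prod_symm _ (ifB hV)]
  have hinner : ∀ y : ℝ, (∫ x, fB (x, y) ∂γ) = (1 - Phi V y) * y := by
    intro y
    have h : ∀ x : ℝ, fB (x, y) = (Ioi y).indicator (fun _ => y) x := by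
      intro x
      by_cases hx : y < x <;> simp [fB, Set.indicator, mem_Ioi, hx]
    rw [integral_congr_ae (Eventually.of_forall h), integral_indicator_const y measurableSet_Ioi,
      measureReal_def, gauss_meas_Ioi hV, smul_eq_mul]
  rw [integral_congr_ae (Eventually.of_forall hinner)]
  rw [integral_congr_ae (Eventually.of_forall fun y => mul_comm (1 - Phi V y) y)]
  exact gauss_integral_xPhi' hV

lemma intfB' : ∫ p, fB' p ∂ρ = aV := by
  rw [integral_prod_symm _ (ifB' hV)]
  have hinner : ∀ y : ℝ, (∫ x, fB' (x, y) ∂γ) = Phi V y * y := by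
    intro y
    have h : ∀ x : ℝ, fB' (x, y) = (Iic y).indicator (fun _ => y) x := by
      intro x
      by_cases hx : y < x
      · simp [fB', Set.indicator, mem_Iic, hx, not_le.2 hx]
      · simp [fB', Set.indicator, mem_Iic, hx, not_lt.1 hx]
    rw [integral_congr_ae (Eventually.of_forall h), integral_indicator_const y measurableSet_Iic,
      measureReal_def, gauss_meas_Iic hV, smul_eq_mul]
  rw [integral_congr_ae (Eventually.of_forall hinner)]
  rw [integral_congr_ae (Eventually.of_forall fun y => mul_comm (Phi V y) y)]
  exact gauss_integral_xPhi hV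

local notation "Pi4" => Measure.prod (Measure.prod (gaussianReal 0 V) (gaussianReal 0 V))
  (Measure.prod (gaussianReal 0 V) (gaussianReal 0 V))

end Rho

noncomputable def F1 (z : (ℝ × ℝ) × (ℝ × ℝ)) : ℝ := if z.1.2 < z.1.1 then z.2.1 else z.2.2
noncomputable def F2 (z : (ℝ × ℝ) × (ℝ × ℝ)) : ℝ := if z.2.2 < z.2.1 then z.1.1 else z.1.2

lemma mF1 : Measurable F1 :=
  Measurable.ite (measurableSet_lt measurable_fst.snd measurable_fst.fst)
    measurable_snd.fst measurable_snd.snd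

lemma mF2 : Measurable F2 :=
  Measurable.ite (measurableSet_lt measurable_snd.snd measurable_snd.fst)
    measurable_fst.fst measurable_fst.snd

lemma dec1 (z : (ℝ × ℝ) × (ℝ × ℝ)) : F1 z = fI z.1 * z.2.1 + fI' z.1 * z.2.2 := by
  by_cases h : z.1.2 < z.1.1 <;> simp [F1, fI, fI', h]

lemma dec1sq (z : (ℝ × ℝ) × (ℝ × ℝ)) : F1 z ^ 2 = fI z.1 * z.2.1 ^ 2 + fI' z.1 * z.2.2 ^ 2 := by
  by_cases h : z.1.2 < z.1.1 <;> simp [F1, fI, fI', h]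

lemma dec2 (z : (ℝ × ℝ) × (ℝ × ℝ)) : F2 z = z.1.1 * fI z.2 + z.1.2 * fI' z.2 := by
  by_cases h : z.2.2 < z.2.1 <;> simp [F2, fI, fI', h]

lemma dec2sq (z : (ℝ × ℝ) × (ℝ × ℝ)) : F2 z ^ 2 = z.1.1 ^ 2 * fI z.2 + z.1.2 ^ 2 * fI' z.2 := by
  by_cases h : z.2.2 < z.2.1 <;> simp [F2, fI, fI', h]

lemma decmul (z : (ℝ × ℝ) × (ℝ × ℝ)) :
    F1 z * F2 z
      = fA z.1 * fA z.2 + fB z.1 * fA' z.2 + fA' z.1 * fB z.2 + fB' z.1 * fB' z.2 := by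
  by_cases h1 : z.1.2 < z.1.1 <;> by_cases h2 : z.2.2 < z.2.1 <;>
    simp [F1, F2, fA, fB, fA', fB', h1, h2] <;> ring

section Pi4Sec

variable (hV : 0 < (V:ℝ))
include hV

local notation "γ" => gaussianReal 0 V
local notation "ρ" => Measure.prod (gaussianReal 0 V) (gaussianReal 0 V)
local notation "Pi4" => Measure.prod (Measure.prod (gaussianReal 0 V) (gaussianReal 0 V))
  (Measure.prod (gaussianReal 0 V) (gaussianReal 0 V))
local notation "aV" => Real.sqrt (V:ℝ) / (2 * Real.sqrt π)

lemma hT11 : Integrable (fun z : (ℝ × ℝ) × (ℝ × ℝ) => fI z.1 * z.2.1) Pi4 :=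
  ifI.mul_prod (rhoFst hV)

lemma hT12 : Integrable (fun z : (ℝ × ℝ) × (ℝ × ℝ) => fI' z.1 * z.2.2) Pi4 :=
  ifI'.mul_prod (rhoSnd hV)

lemma hT21 : Integrable (fun z : (ℝ × ℝ) × (ℝ × ℝ) => z.1.1 * fI z.2) Pi4 :=
  (rhoFst hV).mul_prod ifI

lemma hT22 : Integrable (fun z : (ℝ × ℝ) × (ℝ × ℝ) => z.1.2 * fI' z.2) Pi4 :=
  (rhoSnd hV).mul_prod ifI'

lemma hS11 : Integrable (fun z : (ℝ × ℝ) × (ℝ × ℝ) => fI z.1 * z.2.1 ^ 2) Pi4 :=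
  ifI.mul_prod (rhoFstSq hV)

lemma hS12 : Integrable (fun z : (ℝ × ℝ) × (ℝ × ℝ) => fI' z.1 * z.2.2 ^ 2) Pi4 :=
  ifI'.mul_prod (rhoSndSq hV)

lemma hS21 : Integrable (fun z : (ℝ × ℝ) × (ℝ × ℝ) => z.1.1 ^ 2 * fI z.2) Pi4 :=
  (rhoFstSq hV).mul_prod ifI

lemma hS22 : Integrable (fun z : (ℝ × ℝ) × (ℝ × ℝ) => z.1.2 ^ 2 * fI' z.2) Pi4 :=
  (rhoSndSq hV).mul_prod ifI'

lemma hM1 : Integrable (fun z : (ℝ × ℝ) × (ℝ × ℝ) => fA z.1 * fA z.2) Pi4 :=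
  (ifA hV).mul_prod (ifA hV)

lemma hM2 : Integrable (fun z : (ℝ × ℝ) × (ℝ × ℝ) => fB z.1 * fA' z.2) Pi4 :=
  (ifB hV).mul_prod (ifA' hV)

lemma hM3 : Integrable (fun z : (ℝ × ℝ) × (ℝ × ℝ) => fA' z.1 * fB z.2) Pi4 :=
  (ifA' hV).mul_prod (ifB hV)

lemma hM4 : Integrable (fun z : (ℝ × ℝ) × (ℝ × ℝ) => fB' z.1 * fB' z.2) Pi4 :=
  (ifB' hV).mul_prod (ifB' hV)

lemma iF1 : Integrable F1 Pi4 :=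
  ((hT11 hV).add (hT12 hV)).congr (Eventually.of_forall fun z => (dec1 z).symm)

lemma iF2 : Integrable F2 Pi4 :=
  ((hT21 hV).add (hT22 hV)).congr (Eventually.of_forall fun z => (dec2 z).symm)

lemma iF1sq : Integrable (fun z => F1 z ^ 2) Pi4 :=
  ((hS11 hV).add (hS12 hV)).congr (Eventually.of_forall fun z => (dec1sq z).symm)

lemma iF2sq : Integrable (fun z => F2 z ^ 2) Pi4 :=
  ((hS21 hV).add (hS22 hV)).congr (Eventually.of_forall fun z => (dec2sq z).symm)

lemma iF1F2 : Integrable (fun z => F1 z * F2 z) Pi4 :=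
  ((((hM1 hV).add (hM2 hV)).add (hM3 hV)).add (hM4 hV)).congr
    (Eventually.of_forall fun z => (decmul z).symm)

lemma intF1 : ∫ z, F1 z ∂Pi4 = 0 := by
  rw [integral_congr_ae (Eventually.of_forall dec1), integral_add (hT11 hV) (hT12 hV),
    integral_prod_mul (μ := ρ) (ν := ρ) fI (fun p : ℝ × ℝ => p.1),
    integral_prod_mul (μ := ρ) (ν := ρ) fI' (fun p : ℝ × ℝ => p.2),
    rhoFst_val hV, rhoSnd_val hV]
  ring

lemma intF2 : ∫ z, F2 z ∂Pi4 = 0 := by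
  rw [integral_congr_ae (Eventually.of_forall dec2), integral_add (hT21 hV) (hT22 hV),
    integral_prod_mul (μ := ρ) (ν := ρ) (fun p : ℝ × ℝ => p.1) fI,
    integral_prod_mul (μ := ρ) (ν := ρ) (fun p : ℝ × ℝ => p.2) fI',
    rhoFst_val hV, rhoSnd_val hV]
  ring

lemma intF1sq : ∫ z, F1 z ^ 2 ∂Pi4 = (V : ℝ) := by
  rw [integral_congr_ae (Eventually.of_forall dec1sq), integral_add (hS11 hV) (hS12 hV),
    integral_prod_mul (μ := ρ) (ν := ρ) fI (fun p : ℝ × ℝ => p.1 ^ 2),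
    integral_prod_mul (μ := ρ) (ν := ρ) fI' (fun p : ℝ × ℝ => p.2 ^ 2),
    rhoFstSq_val hV, rhoSndSq_val hV]
  linear_combination (V : ℝ) * intfI_add_fI' hV

lemma intF2sq : ∫ z, F2 z ^ 2 ∂Pi4 = (V : ℝ) := by
  rw [integral_congr_ae (Eventually.of_forall dec2sq), integral_add (hS21 hV) (hS22 hV),
    integral_prod_mul (μ := ρ) (ν := ρ) (fun p : ℝ × ℝ => p.1 ^ 2) fI,
    integral_prod_mul (μ := ρ) (ν := ρ) (fun p : ℝ × ℝ => p.2 ^ 2) fI',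
    rhoFstSq_val hV, rhoSndSq_val hV]
  linear_combination (V : ℝ) * intfI_add_fI' hV

lemma intF1F2 : ∫ z, F1 z * F2 z ∂Pi4 = (V : ℝ) / π := by
  have i12 : Integrable (fun z : (ℝ × ℝ) × (ℝ × ℝ) =>
      fA z.1 * fA z.2 + fB z.1 * fA' z.2) Pi4 := (hM1 hV).add (hM2 hV)
  have i123 : Integrable (fun z : (ℝ × ℝ) × (ℝ × ℝ) =>
      fA z.1 * fA z.2 + fB z.1 * fA' z.2 + fA' z.1 * fB z.2) Pi4 := i12.add (hM3 hV)
  rw [integral_congr_ae (Eventually.of_forall decmul),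
    integral_add i123 (hM4 hV),
    integral_add i12 (hM3 hV),
    integral_add (hM1 hV) (hM2 hV),
    integral_prod_mul (μ := ρ) (ν := ρ) fA fA,
    integral_prod_mul (μ := ρ) (ν := ρ) fB fA',
    integral_prod_mul (μ := ρ) (ν := ρ) fA' fB,
    integral_prod_mul (μ := ρ) (ν := ρ) fB' fB',
    intfA hV, intfB hV, intfA' hV, intfB' hV]
  have hs : Real.sqrt (V:ℝ) * Real.sqrt (V:ℝ) = (V:ℝ) := Real.mul_self_sqrt hV.le
  have ht : Real.sqrt π * Real.sqrt π = π := Real.mul_self_sqrt Real.pi_pos.le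
  have htpos : 0 < Real.sqrt π := Real.sqrt_pos.2 Real.pi_pos
  field_simp
  nlinarith [hs, ht]

end Pi4Sec

end Crossfit


open Crossfit

/-- Cross-fitting correlation at the kink: with four independent `N(0, 1/m)` fold-arm
means `M ℓ j`, the two sample-splitting estimators have covariance `1/(π m)` and
correlation `1/π`. -/
theorem crossfit_covariance_at_kink {Ω : Type*} [MeasurableSpace Ω]
    (μ : Measure Ω) [IsProbabilityMeasure μ]
    (m : ℝ) (hm : 0 < m)
    (M : Fin 2 → Fin 2 → Ω → ℝ)
    (hmeas : ∀ l j, Measurable (M l j))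
    (hdist : ∀ l j, μ.map (M l j) = gaussianReal 0 (Real.toNNReal (1 / m)))
    (hindep : iIndepFun
      (fun p : Fin 2 × Fin 2 => M p.1 p.2) μ)
    (θ1 θ2 : Ω → ℝ)
    (hθ1 : ∀ ω, θ1 ω = if M 0 1 ω < M 0 0 ω then M 1 0 ω else M 1 1 ω)
    (hθ2 : ∀ ω, θ2 ω = if M 1 1 ω < M 1 0 ω then M 0 0 ω else M 0 1 ω) :
    (∫ ω, θ1 ω * θ2 ω ∂μ) - (∫ ω, θ1 ω ∂μ) * (∫ ω, θ2 ω ∂μ) = 1 / (π * m) ∧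
    ((∫ ω, θ1 ω * θ2 ω ∂μ) - (∫ ω, θ1 ω ∂μ) * (∫ ω, θ2 ω ∂μ)) /
        (Real.sqrt (variance θ1 μ) * Real.sqrt (variance θ2 μ)) = 1 / π := by
  set V : ℝ≥0 := Real.toNNReal (1 / m) with hVdef
  have hVr : ((V : ℝ)) = 1 / m := Real.coe_toNNReal _ (by positivity)
  have hV : 0 < (V : ℝ) := by rw [hVr]; positivity
  set P : Ω → (ℝ × ℝ) × (ℝ × ℝ) :=
    fun ω => ((M 0 0 ω, M 0 1 ω), (M 1 0 ω, M 1 1 ω)) with hPdef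
  have hP1meas : Measurable (fun ω => (M 0 0 ω, M 0 1 ω)) := (hmeas 0 0).prodMk (hmeas 0 1)
  have hP2meas : Measurable (fun ω => (M 1 0 ω, M 1 1 ω)) := (hmeas 1 0).prodMk (hmeas 1 1)
  have hPmeas : Measurable P := hP1meas.prodMk hP2meas
  have hmeas' : ∀ p : Fin 2 × Fin 2, Measurable ((fun p : Fin 2 × Fin 2 => M p.1 p.2) p) :=
    fun p => hmeas p.1 p.2
  have hind01 : IndepFun (M 0 0) (M 0 1) μ :=
    hindep.indepFun (i := ((0, 0) : Fin 2 × Fin 2)) (j := ((0, 1) : Fin 2 × Fin 2)) (by decide)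
  have hind23 : IndepFun (M 1 0) (M 1 1) μ :=
    hindep.indepFun (i := ((1, 0) : Fin 2 × Fin 2)) (j := ((1, 1) : Fin 2 × Fin 2)) (by decide)
  have hmap1 : μ.map (fun ω => (M 0 0 ω, M 0 1 ω))
      = Measure.prod (gaussianReal 0 V) (gaussianReal 0 V) := by
    rw [(indepFun_iff_map_prod_eq_prod_map_map (hmeas 0 0).aemeasurable
      (hmeas 0 1).aemeasurable).1 hind01, hdist 0 0, hdist 0 1]
  have hmap2 : μ.map (fun ω => (M 1 0 ω, M 1 1 ω))
      = Measure.prod (gaussianReal 0 V) (gaussianReal 0 V) := by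
    rw [(indepFun_iff_map_prod_eq_prod_map_map (hmeas 1 0).aemeasurable
      (hmeas 1 1).aemeasurable).1 hind23, hdist 1 0, hdist 1 1]
  have hindP : IndepFun (fun ω => (M 0 0 ω, M 0 1 ω)) (fun ω => (M 1 0 ω, M 1 1 ω)) μ :=
    hindep.indepFun_prodMk_prodMk hmeas' (0, 0) (0, 1) (1, 0) (1, 1)
      (by decide) (by decide) (by decide) (by decide)
  have hmapP : μ.map P = Measure.prod
      (Measure.prod (gaussianReal 0 V) (gaussianReal 0 V))
      (Measure.prod (gaussianReal 0 V) (gaussianReal 0 V)) := by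
    rw [hPdef, (indepFun_iff_map_prod_eq_prod_map_map hP1meas.aemeasurable
      hP2meas.aemeasurable).1 hindP, hmap1, hmap2]
  have key : ∀ G : (ℝ × ℝ) × (ℝ × ℝ) → ℝ, Measurable G →
      ∫ ω, G (P ω) ∂μ = ∫ z, G z ∂(Measure.prod
        (Measure.prod (gaussianReal 0 V) (gaussianReal 0 V))
        (Measure.prod (gaussianReal 0 V) (gaussianReal 0 V))) := by
    intro G hG
    rw [← hmapP, integral_map hPmeas.aemeasurable hG.aestronglyMeasurable]
  have keyInt : ∀ G : (ℝ × ℝ) × (ℝ × ℝ) → ℝ, Measurable G →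
      Integrable G (Measure.prod
        (Measure.prod (gaussianReal 0 V) (gaussianReal 0 V))
        (Measure.prod (gaussianReal 0 V) (gaussianReal 0 V))) →
      Integrable (fun ω => G (P ω)) μ := by
    intro G hG hGi
    rw [← hmapP] at hGi
    exact (integrable_map_measure hG.aestronglyMeasurable hPmeas.aemeasurable).1 hGi
  have hθ1e : θ1 = fun ω => F1 (P ω) := funext fun ω => by rw [hθ1 ω]; rfl
  have hθ2e : θ2 = fun ω => F2 (P ω) := funext fun ω => by rw [hθ2 ω]; rfl
  have hE1 : ∫ ω, θ1 ω ∂μ = 0 := by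
    rw [hθ1e, key F1 mF1, intF1 hV]
  have hE2 : ∫ ω, θ2 ω ∂μ = 0 := by
    rw [hθ2e, key F2 mF2, intF2 hV]
  have hE12 : ∫ ω, θ1 ω * θ2 ω ∂μ = (V : ℝ) / π := by
    rw [hθ1e, hθ2e, key (fun z => F1 z * F2 z) (mF1.mul mF2), intF1F2 hV]
  have hvar : ∀ (θ : Ω → ℝ), θ = (fun ω => F1 (P ω)) ∨ θ = (fun ω => F2 (P ω)) →
      variance θ μ = (V : ℝ) := by
    intro θ hθcases
    have hGm : Measurable (fun z : (ℝ × ℝ) × (ℝ × ℝ) => F1 z) := mF1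
    rcases hθcases with hθe | hθe
    · have hmθ : AEStronglyMeasurable θ μ := by
        rw [hθe]; exact (mF1.comp hPmeas).aestronglyMeasurable
      have hisq : Integrable (fun ω => θ ω ^ 2) μ := by
        rw [hθe]
        exact keyInt (fun z => F1 z ^ 2) (mF1.pow_const 2) (iF1sq hV)
      have hmem : MemLp θ 2 μ := (memLp_two_iff_integrable_sq hmθ).2 hisq
      rw [variance_eq_sub hmem]
      have h1 : ∫ ω, (θ ^ 2) ω ∂μ = (V : ℝ) := by
        simp only [Pi.pow_apply]
        rw [hθe, key (fun z => F1 z ^ 2) (mF1.pow_const 2), intF1sq hV]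
      have h2 : ∫ ω, θ ω ∂μ = 0 := by rw [hθe, key F1 mF1, intF1 hV]
      rw [h1, h2]
      ring
    · have hmθ : AEStronglyMeasurable θ μ := by
        rw [hθe]; exact (mF2.comp hPmeas).aestronglyMeasurable
      have hisq : Integrable (fun ω => θ ω ^ 2) μ := by
        rw [hθe]
        exact keyInt (fun z => F2 z ^ 2) (mF2.pow_const 2) (iF2sq hV)
      have hmem : MemLp θ 2 μ := (memLp_two_iff_integrable_sq hmθ).2 hisq
      rw [variance_eq_sub hmem]
      have h1 : ∫ ω, (θ ^ 2) ω ∂μ = (V : ℝ) := by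
        simp only [Pi.pow_apply]
        rw [hθe, key (fun z => F2 z ^ 2) (mF2.pow_const 2), intF2sq hV]
      have h2 : ∫ ω, θ ω ∂μ = 0 := by rw [hθe, key F2 mF2, intF2 hV]
      rw [h1, h2]
      ring
  have hvar1 : variance θ1 μ = (V : ℝ) := hvar θ1 (Or.inl hθ1e)
  have hvar2 : variance θ2 μ = (V : ℝ) := hvar θ2 (Or.inr hθ2e)
  have hcov : (∫ ω, θ1 ω * θ2 ω ∂μ) - (∫ ω, θ1 ω ∂μ) * (∫ ω, θ2 ω ∂μ) = 1 / (π * m) := by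
    rw [hE12, hE1, hE2, hVr]
    rw [mul_zero, sub_zero]
    field_simp
  refine ⟨hcov, ?_⟩
  rw [hcov, hvar1, hvar2]
  have hss : Real.sqrt (V : ℝ) * Real.sqrt (V : ℝ) = (V : ℝ) := Real.mul_self_sqrt hV.le
  rw [hss, hVr]
  rw [div_div_eq_mul_div]
  field_simp
end
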